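/- Let A be an m×n real matrix, b ∈ ℝ^m, c ∈ ℝ^n. If there exist x ≥ 0 with Ax ≤ b and y ≥ 0 with yᵀA ≥ cᵀ, then there exist such feasible x and y with cᵀx = yᵀb that additionally satisfy strict complementarity: y + (b − Ax) > 0 componentwise and xᵀ + (yᵀA − cᵀ) > 0ᵀ componentwise. -/

import Mathlib

open Finset

lemma farkas_gale : ∀ (n : ℕ) {ι : Type} [Fintype ι] (a : ι → Fin n → ℝ) (β : ι → ℝ),
    (¬ ∃ x : Fin n → ℝ, ∀ i, ∑ j, a i j * x j ≤ β i) →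
    ∃ y : ι → ℝ, (∀ i, 0 ≤ y i) ∧ (∀ j, ∑ i, y i * a i j = 0) ∧ ∑ i, y i * β i < 0 := by
  intro n
  induction n with
  | zero =>
    intro ι _ a β h
    push_neg at h
    classical
    obtain ⟨i₀, hi₀⟩ := h 0
    refine ⟨fun i => if i = i₀ then 1 else 0, fun i => by dsimp only; split <;> norm_num, fun j => j.elim0, ?_⟩
    have : ∑ i, (if i = i₀ then (1:ℝ) else 0) * β i = β i₀ := by
      rw [Finset.sum_eq_single i₀] <;> simp +contextual
    rw [this]
    simpa using hi₀
  | succ n ih =>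
    intro ι _ a β h
    classical
    -- tail coefficients
    set ta : ι → Fin n → ℝ := fun i j => a i j.succ with hta
    -- index type of the eliminated system
    let a' : ({i : ι // a i 0 = 0} ⊕ {i : ι // 0 < a i 0} × {i : ι // a i 0 < 0}) → Fin n → ℝ :=
      Sum.elim (fun z => ta z.1)
        (fun pq => fun j => (-(a pq.2.1 0)) * ta pq.1.1 j + a pq.1.1 0 * ta pq.2.1 j)
    let β' : ({i : ι // a i 0 = 0} ⊕ {i : ι // 0 < a i 0} × {i : ι // a i 0 < 0}) → ℝ :=
      Sum.elim (fun z => β z.1)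
        (fun pq => (-(a pq.2.1 0)) * β pq.1.1 + a pq.1.1 0 * β pq.2.1)
    have hexpand : ∀ (c1 c2 : ℝ) (f g x : Fin n → ℝ),
        ∑ j, (c1 * f j + c2 * g j) * x j = c1 * ∑ j, f j * x j + c2 * ∑ j, g j * x j := by
      intro c1 c2 f g x
      rw [Finset.mul_sum, Finset.mul_sum, ← Finset.sum_add_distrib]
      congr 1; funext j; ring
    have h' : ¬ ∃ x' : Fin n → ℝ, ∀ k, ∑ j, a' k j * x' j ≤ β' k := by
      rintro ⟨x', hx'⟩
      apply h
      set d : ι → ℝ := fun i => ∑ j, ta i j * x' j with hd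
      have hZ : ∀ (i : ι), a i 0 = 0 → d i ≤ β i := fun i hi => hx' (Sum.inl ⟨i, hi⟩)
      have hPN : ∀ (p : {i : ι // 0 < a i 0}) (q : {i : ι // a i 0 < 0}),
          (-(a q.1 0)) * d p.1 + a p.1 0 * d q.1 ≤ (-(a q.1 0)) * β p.1 + a p.1 0 * β q.1 := by
        intro p q
        have h0 := hx' (Sum.inr (p, q))
        simp only [a', β', Sum.elim_inr] at h0
        rw [hexpand] at h0
        exact h0
      set u : {i : ι // 0 < a i 0} → ℝ := fun p => (β p.1 - d p.1) / a p.1 0 with hu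
      set l : {i : ι // a i 0 < 0} → ℝ := fun q => (β q.1 - d q.1) / a q.1 0 with hl
      have hlu : ∀ (p : {i : ι // 0 < a i 0}) (q : {i : ι // a i 0 < 0}), l q ≤ u p := by
        intro p q
        have h1 := hPN p q
        have hp := p.2
        have hq := q.2
        have hp0 : a p.1 0 ≠ 0 := ne_of_gt hp
        have hq0 : a q.1 0 ≠ 0 := ne_of_lt hq
        have e1 : β p.1 - d p.1 = u p * a p.1 0 := by rw [hu]; field_simp
        have e2 : β q.1 - d q.1 = l q * a q.1 0 := by rw [hl]; field_simp
        nlinarith [mul_pos hp (neg_pos.mpr hq)]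
      -- choose x0
      obtain ⟨x0, hx0P, hx0N⟩ : ∃ x0 : ℝ, (∀ p, x0 ≤ u p) ∧ (∀ q, l q ≤ x0) := by
        by_cases hPne : Nonempty {i : ι // 0 < a i 0}
        · refine ⟨(Finset.univ.inf' Finset.univ_nonempty u), fun p => Finset.inf'_le _ (Finset.mem_univ p), fun q => Finset.le_inf' _ _ (fun p _ => hlu p q)⟩
        · by_cases hNne : Nonempty {i : ι // a i 0 < 0}
          · exact ⟨(Finset.univ.sup' Finset.univ_nonempty l), fun p => absurd ⟨p⟩ hPne, fun q => Finset.le_sup' _ (Finset.mem_univ q)⟩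
          · exact ⟨0, fun p => absurd ⟨p⟩ hPne, fun q => absurd ⟨q⟩ hNne⟩
      refine ⟨Fin.cons x0 x', fun i => ?_⟩
      have hsum : ∑ j, a i j * (Fin.cons x0 x' : Fin (n+1) → ℝ) j = a i 0 * x0 + d i := by
        rw [Fin.sum_univ_succ]
        simp [hd, hta]
      rw [hsum]
      rcases lt_trichotomy (a i 0) 0 with hneg | hzero | hpos
      · have := hx0N ⟨i, hneg⟩
        have : (β i - d i) / a i 0 ≤ x0 := this
        rw [div_le_iff_of_neg hneg] at this
        linarith
      · rw [hzero]
        have := hZ i hzero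
        linarith
      · have := hx0P ⟨i, hpos⟩
        have : x0 ≤ (β i - d i) / a i 0 := this
        rw [le_div_iff₀ hpos] at this
        linarith
    obtain ⟨y', hy'0, hy'col, hy'β⟩ := ih a' β' h'
    -- weights
    set w : ({i : ι // a i 0 = 0} ⊕ {i : ι // 0 < a i 0} × {i : ι // a i 0 < 0}) → ι → ℝ :=
      Sum.elim (fun z i => if i = z.1 then 1 else 0)
        (fun pq i => (if i = pq.1.1 then -(a pq.2.1 0) else 0) + (if i = pq.2.1 then a pq.1.1 0 else 0))
      with hw
    set y : ι → ℝ := fun i => ∑ k, y' k * w k i with hy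
    have hcollapse : ∀ (t : ι) (cc : ℝ) (f : ι → ℝ),
        ∑ i, (if i = t then cc else 0) * f i = cc * f t := by
      intro t cc f
      rw [Finset.sum_eq_single t] <;> simp +contextual
    have hkey : ∀ f : ι → ℝ, ∑ i, y i * f i = ∑ k, y' k * (∑ i, w k i * f i) := by
      intro f
      rw [hy]
      simp_rw [Finset.sum_mul, Finset.mul_sum]
      rw [Finset.sum_comm]
      simp_rw [mul_assoc]
    have hinner : ∀ (k) (f : ι → ℝ), ∑ i, w k i * f i =
        Sum.elim (fun (z : {i : ι // a i 0 = 0}) => f z.1)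
          (fun pq => (-(a pq.2.1 0)) * f pq.1.1 + a pq.1.1 0 * f pq.2.1) k := by
      intro k f
      rcases k with z | pq
      · simpa [hw] using hcollapse z.1 1 f
      · simp only [hw, Sum.elim_inr, add_mul, Finset.sum_add_distrib, hcollapse]
    refine ⟨y, ?_, ?_, ?_⟩
    · intro i
      rw [hy]
      apply Finset.sum_nonneg
      intro k _
      apply mul_nonneg (hy'0 k)
      rcases k with z | pq
      · simp only [hw, Sum.elim_inl]
        split <;> norm_num
      · have := pq.1.2
        have := pq.2.2
        simp only [hw, Sum.elim_inr]
        split <;> split <;> linarith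
    · intro j
      refine Fin.cases ?_ ?_ j
      · rw [hkey (fun i => a i 0)]
        apply Finset.sum_eq_zero
        intro k _
        rw [hinner]
        rcases k with z | pq
        · simp only [Sum.elim_inl, z.2, mul_zero]
        · simp only [Sum.elim_inr]
          have : -a pq.2.1 0 * a pq.1.1 0 + a pq.1.1 0 * a pq.2.1 0 = 0 := by ring
          rw [this, mul_zero]
      · intro j
        rw [hkey (fun i => a i j.succ)]
        refine Eq.trans (Finset.sum_congr rfl ?_) (hy'col j)
        intro k _
        rw [hinner]
        rcases k with z | pq <;> simp [a', hta]
    · rw [hkey β]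
      refine lt_of_le_of_lt (le_of_eq (Finset.sum_congr rfl ?_)) hy'β
      intro k _
      rw [hinner]

lemma farkas_gale' {ι σ : Type} [Fintype ι] [Fintype σ]
    (a : ι → σ → ℝ) (β : ι → ℝ)
    (h : ¬ ∃ x : σ → ℝ, ∀ i, ∑ s, a i s * x s ≤ β i) :
    ∃ y : ι → ℝ, (∀ i, 0 ≤ y i) ∧ (∀ s, ∑ i, y i * a i s = 0) ∧ ∑ i, y i * β i < 0 := by
  classical
  set e := Fintype.equivFin σ with he
  have h2 : ¬ ∃ x : Fin (Fintype.card σ) → ℝ, ∀ i, ∑ j, a i (e.symm j) * x j ≤ β i := by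
    rintro ⟨x, hx⟩
    refine h ⟨fun s => x (e s), fun i => ?_⟩
    have h3 : ∑ s, a i s * x (e s) = ∑ j, a i (e.symm j) * x (e (e.symm j)) :=
      (Equiv.sum_comp e.symm (fun s => a i s * x (e s))).symm
    simp only [Equiv.apply_symm_apply] at h3
    rw [h3]
    exact hx i
  obtain ⟨y, h0, hcol, hβ⟩ := farkas_gale _ _ _ h2
  refine ⟨y, h0, fun s => ?_, hβ⟩
  have := hcol (e s)
  simpa using this

lemma tucker_index {ι : Type} [Fintype ι] [DecidableEq ι] (M : Matrix ι ι ℝ)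
    (hskew : ∀ r s, M r s = -(M s r)) (i : ι) :
    ∃ z : ι → ℝ, (∀ s, 0 ≤ z s) ∧ (∀ s, 0 ≤ ∑ t, M s t * z t) ∧ 0 < z i + ∑ t, M i t * z t := by
  classical
  set a : (ι ⊕ ι ⊕ Unit) → ι → ℝ :=
    Sum.elim (fun r s => -(M r s))
      (Sum.elim (fun r s => if s = r then (-1:ℝ) else 0) (fun _ s => -(M i s))) with ha
  set β : (ι ⊕ ι ⊕ Unit) → ℝ :=
    Sum.elim (fun _ => 0) (Sum.elim (fun _ => 0) (fun _ => -1)) with hβd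
  have hcollapse : ∀ (t : ι) (cc : ℝ) (f : ι → ℝ),
      ∑ s, (if s = t then cc else 0) * f s = cc * f t := by
    intro t cc f
    rw [Finset.sum_eq_single t] <;> simp +contextual
  by_cases hfeas : ∃ z : ι → ℝ, ∀ k, ∑ s, a k s * z s ≤ β k
  · obtain ⟨z, hz⟩ := hfeas
    have hz0 : ∀ r, 0 ≤ z r := by
      intro r
      have := hz (Sum.inr (Sum.inl r))
      simp only [ha, hβd, Sum.elim_inr, Sum.elim_inl] at this
      rw [hcollapse r (-1) z] at this
      linarith
    have hMz : ∀ r, 0 ≤ ∑ t, M r t * z t := by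
      intro r
      have := hz (Sum.inl r)
      simp only [ha, hβd, Sum.elim_inl, neg_mul] at this
      rw [Finset.sum_neg_distrib] at this
      linarith
    refine ⟨z, hz0, hMz, ?_⟩
    have := hz (Sum.inr (Sum.inr ()))
    simp only [ha, hβd, Sum.elim_inr, neg_mul] at this
    rw [Finset.sum_neg_distrib] at this
    have := hz0 i
    linarith
  · obtain ⟨y, hy0, hycol, hyβ⟩ := farkas_gale' a β hfeas
    set lam := y (Sum.inr (Sum.inr ())) with hlam
    have hlampos : 0 < lam := by
      rw [Fintype.sum_sum_type, Fintype.sum_sum_type] at hyβ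
      simp only [hβd, Sum.elim_inl, Sum.elim_inr, mul_zero, mul_neg_one,
        Finset.sum_const_zero, Fintype.univ_unit] at hyβ
      simp at hyβ
      linarith [hyβ]
    set z : ι → ℝ := fun s => y (Sum.inl s) + (if s = i then lam else 0) with hzdef
    have hz0 : ∀ s, 0 ≤ z s := by
      intro s
      have h1 := hy0 (Sum.inl s)
      rw [hzdef]
      dsimp only
      split <;> linarith
    have hMzv : ∀ s, ∑ t, M s t * z t = y (Sum.inr (Sum.inl s)) := by
      intro s
      have hc := hycol s
      rw [Fintype.sum_sum_type, Fintype.sum_sum_type] at hc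
      simp only [ha, Sum.elim_inl, Sum.elim_inr, Fintype.univ_unit] at hc
      have hmid : ∑ r, y (Sum.inr (Sum.inl r)) * (if s = r then (-1:ℝ) else 0)
          = -(y (Sum.inr (Sum.inl s))) := by
        rw [Finset.sum_eq_single s]
        · simp
        · intro b _ hb
          rw [if_neg (fun h => hb h.symm), mul_zero]
        · simp
      rw [hmid] at hc
      simp only [Finset.sum_singleton, Finset.univ_unique] at hc
      -- hc : ∑ r, y (inl r) * -(M r s) + (-(y (inr inl s))) + lam' * -(M i s) = 0
      have hsum : ∑ t, M s t * z t
          = ∑ t, M s t * y (Sum.inl t) + M s i * lam := by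
        rw [hzdef]
        dsimp only
        simp_rw [mul_add]
        rw [Finset.sum_add_distrib]
        congr 1
        rw [Finset.sum_eq_single i] <;> simp +contextual
      rw [hsum]
      have hflip : ∑ t, M s t * y (Sum.inl t) = -∑ r, y (Sum.inl r) * M r s := by
        rw [← Finset.sum_neg_distrib]
        apply Finset.sum_congr rfl
        intro t _
        rw [hskew s t]
        ring
      rw [hflip, hskew s i]
      rw [← hlam] at hc
      simp only [mul_neg] at hc
      rw [Finset.sum_neg_distrib] at hc
      linear_combination hc
    refine ⟨z, hz0, fun s => by rw [hMzv s]; exact hy0 _, ?_⟩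
    have : lam ≤ z i := by
      have := hy0 (Sum.inl i)
      rw [hzdef]; simp; linarith
    have := hy0 (Sum.inr (Sum.inl i))
    rw [hMzv i]
    linarith

lemma tucker {ι : Type} [Fintype ι] [DecidableEq ι] (M : Matrix ι ι ℝ)
    (hskew : ∀ r s, M r s = -(M s r)) :
    ∃ z : ι → ℝ, (∀ s, 0 ≤ z s) ∧ (∀ s, 0 ≤ ∑ t, M s t * z t) ∧
      ∀ s, 0 < z s + ∑ t, M s t * z t := by
  classical
  choose Z h0 h1 h2 using tucker_index M hskew
  refine ⟨fun s => ∑ i, Z i s, fun s => Finset.sum_nonneg (fun i _ => h0 i s), ?_, ?_⟩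
  · intro s
    have : ∑ t, M s t * ∑ i, Z i t = ∑ i, ∑ t, M s t * Z i t := by
      simp_rw [Finset.mul_sum]
      rw [Finset.sum_comm]
    rw [this]
    exact Finset.sum_nonneg (fun i _ => h1 i s)
  · intro s
    have he : ∑ t, M s t * ∑ i, Z i t = ∑ i, ∑ t, M s t * Z i t := by
      simp_rw [Finset.mul_sum]
      rw [Finset.sum_comm]
    rw [he, ← Finset.sum_add_distrib]
    apply Finset.sum_pos' (fun i _ => by linarith [h0 i s, h1 i s])
    exact ⟨s, Finset.mem_univ s, h2 s⟩

open Matrix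

theorem lp_strict_complementarity (m n : ℕ) (A : Matrix (Fin m) (Fin n) ℝ)
    (b : Fin m → ℝ) (c : Fin n → ℝ)
    (hP : ∃ x : Fin n → ℝ, 0 ≤ x ∧ A.mulVec x ≤ b)
    (hD : ∃ y : Fin m → ℝ, 0 ≤ y ∧ c ≤ A.vecMul y) :
    ∃ (x : Fin n → ℝ) (y : Fin m → ℝ),
      0 ≤ x ∧ A.mulVec x ≤ b ∧ 0 ≤ y ∧ c ≤ A.vecMul y ∧ c ⬝ᵥ x = y ⬝ᵥ b ∧
      (∀ i, 0 < y i + (b i - A.mulVec x i)) ∧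
      (∀ j, 0 < x j + (A.vecMul y j - c j)) := by
  classical
  obtain ⟨xf, hxf0, hxfA⟩ := hP
  obtain ⟨yf, hyf0, hyfA⟩ := hD
  have hmv : ∀ (x : Fin n → ℝ) (i : Fin m), A.mulVec x i = ∑ j, A i j * x j := fun _ _ => rfl
  have hvm : ∀ (y : Fin m → ℝ) (j : Fin n), A.vecMul y j = ∑ i, y i * A i j := fun _ _ => rfl
  have hswap : ∀ (v : Fin m → ℝ) (w : Fin n → ℝ),
      ∑ i, v i * ∑ j, A i j * w j = ∑ j, (∑ i, v i * A i j) * w j := by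
    intro v w
    simp_rw [Finset.mul_sum, Finset.sum_mul]
    rw [Finset.sum_comm]
    refine Finset.sum_congr rfl fun j _ => Finset.sum_congr rfl fun i _ => by ring
  set M : Matrix (Fin m ⊕ (Fin n ⊕ Unit)) (Fin m ⊕ (Fin n ⊕ Unit)) ℝ :=
    Sum.elim
      (fun i => Sum.elim (fun _ => (0:ℝ)) (Sum.elim (fun j => -(A i j)) (fun _ => b i)))
      (Sum.elim
        (fun j => Sum.elim (fun i => A i j) (Sum.elim (fun _ => (0:ℝ)) (fun _ => -(c j))))
        (fun _ => Sum.elim (fun i => -(b i)) (Sum.elim (fun j => c j) (fun _ => (0:ℝ)))))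
    with hM
  have hskew : ∀ r s, M r s = -(M s r) := by
    rintro (i | j | u) (i' | j' | u') <;> simp [hM]
  obtain ⟨z, h0, h1, h2⟩ := tucker M hskew
  set y0 : Fin m → ℝ := fun i => z (Sum.inl i) with hy0
  set x0 : Fin n → ℝ := fun j => z (Sum.inr (Sum.inl j)) with hx0
  set t : ℝ := z (Sum.inr (Sum.inr ())) with hT
  have hrow1 : ∀ i, ∑ s, M (Sum.inl i) s * z s = b i * t - ∑ j, A i j * x0 j := by
    intro i
    rw [Fintype.sum_sum_type, Fintype.sum_sum_type]
    simp [hM, Finset.sum_neg_distrib]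
    ring
  have hrow2 : ∀ j, ∑ s, M (Sum.inr (Sum.inl j)) s * z s
      = ∑ i, A i j * y0 i - c j * t := by
    intro j
    rw [Fintype.sum_sum_type, Fintype.sum_sum_type]
    simp [hM]
    ring
  have hrow3 : ∑ s, M (Sum.inr (Sum.inr ())) s * z s
      = ∑ j, c j * x0 j - ∑ i, b i * y0 i := by
    rw [Fintype.sum_sum_type, Fintype.sum_sum_type]
    simp [hM, Finset.sum_neg_distrib]
    ring
  have F1 : ∀ i, 0 ≤ b i * t - ∑ j, A i j * x0 j := fun i => (hrow1 i) ▸ h1 (Sum.inl i)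
  have F2 : ∀ j, 0 ≤ ∑ i, A i j * y0 i - c j * t := fun j => (hrow2 j) ▸ h1 (Sum.inr (Sum.inl j))
  have F3 : 0 ≤ ∑ j, c j * x0 j - ∑ i, b i * y0 i := hrow3 ▸ h1 (Sum.inr (Sum.inr ()))
  have G1 : ∀ i, 0 < y0 i + (b i * t - ∑ j, A i j * x0 j) := by
    intro i
    have := h2 (Sum.inl i)
    rwa [hrow1 i] at this
  have G2 : ∀ j, 0 < x0 j + (∑ i, A i j * y0 i - c j * t) := by
    intro j
    have := h2 (Sum.inr (Sum.inl j))
    rwa [hrow2 j] at this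
  have G3 : 0 < t + (∑ j, c j * x0 j - ∑ i, b i * y0 i) := by
    have := h2 (Sum.inr (Sum.inr ()))
    rwa [hrow3] at this
  rcases lt_or_eq_of_le (h0 (Sum.inr (Sum.inr ()))) with ht | ht
  · -- t > 0 : scale
    refine ⟨fun j => x0 j / t, fun i => y0 i / t, ?_, ?_, ?_, ?_, ?_, ?_, ?_⟩
    · intro j
      exact div_nonneg (h0 _) (le_of_lt ht)
    · intro i
      rw [hmv]
      have hs : ∑ j, A i j * (x0 j / t) = (∑ j, A i j * x0 j) / t := by
        rw [Finset.sum_div]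
        exact Finset.sum_congr rfl fun j _ => by ring
      rw [hs, div_le_iff₀ ht]
      linarith [F1 i]
    · intro i
      exact div_nonneg (h0 _) (le_of_lt ht)
    · intro j
      rw [hvm]
      have hs : ∑ i, y0 i / t * A i j = (∑ i, A i j * y0 i) / t := by
        rw [Finset.sum_div]
        exact Finset.sum_congr rfl fun i _ => by ring
      rw [hs, le_div_iff₀ ht]
      linarith [F2 j]
    · -- equality of objectives
      show ∑ j, c j * (x0 j / t) = ∑ i, y0 i / t * b i
      have e1 : ∑ j, c j * (x0 j / t) = (∑ j, c j * x0 j) / t := by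
        rw [Finset.sum_div]; exact Finset.sum_congr rfl fun j _ => by ring
      have e2 : ∑ i, y0 i / t * b i = (∑ i, b i * y0 i) / t := by
        rw [Finset.sum_div]; exact Finset.sum_congr rfl fun i _ => by ring
      rw [e1, e2]
      have hle : ∑ j, c j * x0 j ≤ ∑ i, b i * y0 i := by
        have w1 : ∑ j, (c j * t) * x0 j ≤ ∑ j, (∑ i, y0 i * A i j) * x0 j := by
          apply Finset.sum_le_sum
          intro j _
          apply mul_le_mul_of_nonneg_right _ (h0 (Sum.inr (Sum.inl j)))
          have h3 := F2 j
          have h4 : (∑ i, A i j * y0 i) = ∑ i, y0 i * A i j :=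
            Finset.sum_congr rfl fun i _ => by ring
          linarith [h4 ▸ h3]
        have w2 : ∑ i, y0 i * ∑ j, A i j * x0 j = ∑ j, (∑ i, y0 i * A i j) * x0 j :=
          hswap y0 x0
        have w3 : ∑ i, y0 i * ∑ j, A i j * x0 j ≤ ∑ i, y0 i * (b i * t) := by
          apply Finset.sum_le_sum
          intro i _
          exact mul_le_mul_of_nonneg_left (by linarith [F1 i]) (h0 (Sum.inl i))
        have w4 : ∑ j, (c j * t) * x0 j = t * ∑ j, c j * x0 j := by
          rw [Finset.mul_sum]
          exact Finset.sum_congr rfl fun j _ => by ring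
        have w5 : ∑ i, y0 i * (b i * t) = t * ∑ i, b i * y0 i := by
          rw [Finset.mul_sum]
          exact Finset.sum_congr rfl fun i _ => by ring
        have : t * (∑ j, c j * x0 j) ≤ t * (∑ i, b i * y0 i) := by
          rw [← w4, ← w5]
          linarith [w1, w2, w3]
        exact le_of_mul_le_mul_left this ht
      have hge : ∑ i, b i * y0 i ≤ ∑ j, c j * x0 j := by linarith [F3]
      rw [le_antisymm hle hge]
    · intro i
      rw [hmv]
      have hs : ∑ j, A i j * (x0 j / t) = (∑ j, A i j * x0 j) / t := by
        rw [Finset.sum_div]; exact Finset.sum_congr rfl fun j _ => by ring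
      rw [hs]
      have hpos := G1 i
      have : 0 < (y0 i + (b i * t - ∑ j, A i j * x0 j)) / t := div_pos hpos ht
      have heq : (y0 i + (b i * t - ∑ j, A i j * x0 j)) / t
          = y0 i / t + (b i - (∑ j, A i j * x0 j) / t) := by
        rw [add_div, sub_div, mul_div_assoc, div_self (ne_of_gt ht), mul_one]
      linarith [heq ▸ this]
    · intro j
      rw [hvm]
      have hs : ∑ i, y0 i / t * A i j = (∑ i, A i j * y0 i) / t := by
        rw [Finset.sum_div]; exact Finset.sum_congr rfl fun i _ => by ring
      rw [hs]
      have hpos := G2 j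
      have : 0 < (x0 j + (∑ i, A i j * y0 i - c j * t)) / t := div_pos hpos ht
      have heq : (x0 j + (∑ i, A i j * y0 i - c j * t)) / t
          = x0 j / t + ((∑ i, A i j * y0 i) / t - c j) := by
        rw [add_div, sub_div, mul_div_assoc, div_self (ne_of_gt ht), mul_one]
      linarith [heq ▸ this]
  · -- t = 0 : contradiction
    exfalso
    have ht0 : t = 0 := ht.symm
    have hcx : ∑ j, c j * x0 j ≤ 0 := by
      have w1 : ∑ j, c j * x0 j ≤ ∑ j, (∑ i, yf i * A i j) * x0 j := by
        apply Finset.sum_le_sum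
        intro j _
        apply mul_le_mul_of_nonneg_right _ (h0 (Sum.inr (Sum.inl j)))
        have := hyfA j
        rwa [hvm] at this
      have w2 : ∑ j, (∑ i, yf i * A i j) * x0 j = ∑ i, yf i * ∑ j, A i j * x0 j :=
        (hswap yf x0).symm
      have w3 : ∑ i, yf i * ∑ j, A i j * x0 j ≤ 0 := by
        apply Finset.sum_nonpos
        intro i _
        apply mul_nonpos_of_nonneg_of_nonpos (hyf0 i)
        have := F1 i
        rw [ht0] at this
        linarith
      linarith
    have hby : 0 ≤ ∑ i, b i * y0 i := by
      have w1 : ∑ i, (A.mulVec xf) i * y0 i ≤ ∑ i, b i * y0 i := by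
        apply Finset.sum_le_sum
        intro i _
        exact mul_le_mul_of_nonneg_right (hxfA i) (h0 (Sum.inl i))
      have w2 : ∑ i, (A.mulVec xf) i * y0 i = ∑ j, (∑ i, A i j * y0 i) * xf j := by
        have : ∑ i, (A.mulVec xf) i * y0 i = ∑ i, y0 i * ∑ j, A i j * xf j := by
          refine Finset.sum_congr rfl fun i _ => by rw [hmv]; ring
        rw [this, hswap y0 xf]
        refine Finset.sum_congr rfl fun j _ => ?_
        have : ∑ i, y0 i * A i j = ∑ i, A i j * y0 i :=
          Finset.sum_congr rfl fun i _ => by ring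
        rw [this]
      have w3 : 0 ≤ ∑ j, (∑ i, A i j * y0 i) * xf j := by
        apply Finset.sum_nonneg
        intro j _
        apply mul_nonneg _ (hxf0 j)
        have := F2 j
        rw [ht0] at this
        linarith
      linarith
    rw [ht0] at G3
    linarith
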